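/- Let (X,S) be an association scheme, (Y,T) a 3-equivalenced association scheme, x₀ ∈ X and y₀ ∈ Y. For every central primitive idempotent e of the Terwilliger algebra T(X,S,x₀) with e ≠ ∑_{s∈S} n_s^{-1} ε_{x₀s} J_X ε_{x₀s} (the trivial central primitive idempotent), the Kronecker product e ⊗ ε_{{y₀}} ∈ Mat_{X×Y}(ℂ) is a central primitive idempotent of the Terwilliger algebra T(S≀T) of the wreath product at (x₀,y₀). -/

import Mathlib

open Matrix BigOperators Kronecker
open scoped Classical

section Defs

variable {Z : Type*} [Fintype Z] [DecidableEq Z]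

/-- The identity (diagonal) relation on `Z`. -/
def diagRel (Z : Type*) [Fintype Z] [DecidableEq Z] : Finset (Z × Z) :=
  Finset.univ.filter fun p => p.1 = p.2

/-- The converse relation. -/
def convRel (s : Finset (Z × Z)) : Finset (Z × Z) := s.image fun p => (p.2, p.1)

/-- The intersection number `p_{st}^u`, computed at an arbitrary pair of `u`. -/
noncomputable def pNum (s t u : Finset (Z × Z)) : ℕ :=
  if h : u.Nonempty then
    (Finset.univ.filter fun z => (h.choose.1, z) ∈ s ∧ (z, h.choose.2) ∈ t).card
  else 0

/-- The valency `n_s = p_{s s*}^{1}`. -/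
noncomputable def valency (s : Finset (Z × Z)) : ℕ := pNum s (convRel s) (diagRel Z)

/-- The adjacency matrix of a relation. -/
def adjMat (s : Finset (Z × Z)) : Matrix Z Z ℂ :=
  Matrix.of fun x y => if (x, y) ∈ s then 1 else 0

/-- The diagonal 0/1 matrix of a subset. -/
def eps (U : Finset Z) : Matrix Z Z ℂ := Matrix.diagonal fun i => if i ∈ U then 1 else 0

/-- The all-ones matrix. -/
def allOnes (Z : Type*) : Matrix Z Z ℂ := Matrix.of fun _ _ => 1

/-- `pointFiber x s = xs = {y : (x,y) ∈ s}`. -/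
def pointFiber (x : Z) (s : Finset (Z × Z)) : Finset Z :=
  Finset.univ.filter fun y => (x, y) ∈ s

/-- An association scheme on a finite set `Z`: a partition of `Z × Z` into nonempty
relations containing the identity relation, closed under converse, and with
well-defined intersection numbers. -/
structure AssocScheme (Z : Type*) [Fintype Z] [DecidableEq Z] where
  rels : Finset (Finset (Z × Z))
  nonempty_mem : ∀ s ∈ rels, s.Nonempty
  cover : ∀ p : Z × Z, ∃ s ∈ rels, p ∈ s
  pairwise_disjoint : ∀ s ∈ rels, ∀ t ∈ rels, s ≠ t → Disjoint s t
  id_mem : diagRel Z ∈ rels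
  conv_mem : ∀ s ∈ rels, convRel s ∈ rels
  pconst : ∀ s ∈ rels, ∀ t ∈ rels, ∀ u ∈ rels, ∀ p ∈ u, ∀ q ∈ u,
    (Finset.univ.filter fun z => (p.1, z) ∈ s ∧ (z, p.2) ∈ t).card =
    (Finset.univ.filter fun z => (q.1, z) ∈ s ∧ (z, q.2) ∈ t).card

/-- A scheme is 3-equivalenced when it has more than one point and every
non-identity basic relation has valency 3. -/
def ThreeEquivalenced (B : AssocScheme Z) : Prop :=
  1 < Fintype.card Z ∧ ∀ t ∈ B.rels, t ≠ diagRel Z → valency t = 3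

/-- A scheme is k-equivalenced when it has more than one point and every
non-identity basic relation has valency k. -/
def KEquivalenced (B : AssocScheme Z) (k : ℕ) : Prop :=
  1 < Fintype.card Z ∧ ∀ t ∈ B.rels, t ≠ diagRel Z → valency t = k

/-- A scheme is imprimitive if some union of basic relations is an equivalence
relation different from the identity relation and from the full relation. -/
def Imprimitive (B : AssocScheme Z) : Prop :=
  ∃ R ⊆ B.rels, Equivalence (fun x y : Z => (x, y) ∈ R.sup id) ∧
    R.sup id ≠ diagRel Z ∧ R.sup id ≠ Finset.univ

/-- A coherent algebra: a subalgebra of the matrix algebra containing the all-ones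
matrix (and the identity), closed under conjugate transpose and Hadamard product. -/
def IsCoherent (𝒜 : Subalgebra ℂ (Matrix Z Z ℂ)) : Prop :=
  allOnes Z ∈ 𝒜 ∧ (∀ M ∈ 𝒜, Mᴴ ∈ 𝒜) ∧
  ∀ M ∈ 𝒜, ∀ N ∈ 𝒜, Matrix.hadamard M N ∈ 𝒜

/-- The one-point-extension algebra: the smallest coherent algebra containing all
adjacency matrices of the scheme and the diagonal matrix unit at `x`. -/
noncomputable def onePointAlg (B : AssocScheme Z) (x : Z) : Subalgebra ℂ (Matrix Z Z ℂ) :=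
  sInf {𝒜 | IsCoherent 𝒜 ∧ (∀ s ∈ B.rels, adjMat s ∈ 𝒜) ∧ eps {x} ∈ 𝒜}

/-- A matrix has only 0/1 entries. -/
def IsZeroOne (M : Matrix Z Z ℂ) : Prop := ∀ i j, M i j = 0 ∨ M i j = 1

/-- A basic relation matrix of a coherent algebra: a nonzero 0/1 matrix in the
algebra whose only 0/1 minorants in the algebra are 0 and itself. -/
def IsBasicMatrix (𝒜 : Subalgebra ℂ (Matrix Z Z ℂ)) (B : Matrix Z Z ℂ) : Prop :=
  B ∈ 𝒜 ∧ IsZeroOne B ∧ B ≠ 0 ∧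
  ∀ C ∈ 𝒜, IsZeroOne C → (∀ i j, C i j = 1 → B i j = 1) → C = 0 ∨ C = B

/-- The Terwilliger algebra of a scheme with respect to the base point `x`. -/
noncomputable def terwAlg (B : AssocScheme Z) (x : Z) : Subalgebra ℂ (Matrix Z Z ℂ) :=
  Algebra.adjoin ℂ
    ({M | ∃ s ∈ B.rels, M = adjMat s} ∪ {M | ∃ s ∈ B.rels, M = eps (pointFiber x s)})

/-- A central primitive idempotent of a (set underlying a) matrix algebra: a nonzero
central idempotent that is not the sum of two nonzero orthogonal central idempotents. -/
def IsCPI {n : Type*} [Fintype n] [DecidableEq n] (𝒜 : Set (Matrix n n ℂ))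
    (e : Matrix n n ℂ) : Prop :=
  e ∈ 𝒜 ∧ e ≠ 0 ∧ e * e = e ∧ (∀ a ∈ 𝒜, a * e = e * a) ∧
  ¬∃ f g : Matrix n n ℂ, f ∈ 𝒜 ∧ g ∈ 𝒜 ∧ f ≠ 0 ∧ g ≠ 0 ∧
    f * f = f ∧ g * g = g ∧ (∀ a ∈ 𝒜, a * f = f * a) ∧ (∀ a ∈ 𝒜, a * g = g * a) ∧
    f * g = 0 ∧ g * f = 0 ∧ e = f + g

/-- The trivial central primitive idempotent
`∑_{s∈S} n_s⁻¹ ε_{x s} J ε_{x s}` of the Terwilliger algebra. -/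
noncomputable def trivTerwIdem (B : AssocScheme Z) (x : Z) : Matrix Z Z ℂ :=
  ∑ s ∈ B.rels, ((valency s : ℂ)⁻¹) •
    (eps (pointFiber x s) * allOnes Z * eps (pointFiber x s))

/-- The adjacency algebra `A(S) = span{σ_s : s ∈ S}` as a set of matrices. -/
def adjAlgSet (B : AssocScheme Z) : Set (Matrix Z Z ℂ) :=
  ↑(Submodule.span ℂ {M | ∃ s ∈ B.rels, M = adjMat s})

end Defs

section Wreath

variable {X Y : Type*} [Fintype X] [DecidableEq X] [Fintype Y] [DecidableEq Y]

/-- Generators of the Terwilliger algebra of the wreath product at `(x₀, y₀)`. -/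
def wreathGens (A : AssocScheme X) (B : AssocScheme Y) (x₀ : X) (y₀ : Y) :
    Set (Matrix (X × Y) (X × Y) ℂ) :=
  {M | ∃ s ∈ A.rels, M = adjMat s ⊗ₖ (1 : Matrix Y Y ℂ)} ∪
  {M | ∃ s ∈ A.rels, M = eps (pointFiber x₀ s) ⊗ₖ eps ({y₀} : Finset Y)} ∪
  {M | ∃ t ∈ B.rels, t ≠ diagRel Y ∧ M = allOnes X ⊗ₖ adjMat t} ∪
  {M | ∃ t ∈ B.rels, t ≠ diagRel Y ∧ M = (1 : Matrix X X ℂ) ⊗ₖ eps (pointFiber y₀ t)}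

/-- The Terwilliger algebra of the wreath product at `(x₀, y₀)`. -/
noncomputable def wreathTerw (A : AssocScheme X) (B : AssocScheme Y) (x₀ : X) (y₀ : Y) :
    Subalgebra ℂ (Matrix (X × Y) (X × Y) ℂ) :=
  Algebra.adjoin ℂ (wreathGens A B x₀ y₀)

/-- The relation `s̃` of the wreath product coming from `s ∈ S`. -/
def tildeRel (s : Finset (X × X)) : Finset ((X × Y) × (X × Y)) :=
  Finset.univ.filter fun p => (p.1.1, p.2.1) ∈ s ∧ p.1.2 = p.2.2

/-- The relation `t̄` of the wreath product coming from `t ∈ T \ {1}`. -/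
def barRel (t : Finset (Y × Y)) : Finset ((X × Y) × (X × Y)) :=
  Finset.univ.filter fun p => (p.1.2, p.2.2) ∈ t

/-- The basic relations of the wreath product `S ≀ T`. -/
def wreathRels (A : AssocScheme X) (B : AssocScheme Y) :
    Finset (Finset ((X × Y) × (X × Y))) :=
  A.rels.image (tildeRel (Y := Y)) ∪ (B.rels.erase (diagRel Y)).image (barRel (X := X))

/-- The trivial central primitive idempotent
`e₀ = ∑_u n_u⁻¹ ε_{(x₀,y₀)u} J ε_{(x₀,y₀)u}` of `T(S ≀ T)`. -/
noncomputable def wreathTriv (A : AssocScheme X) (B : AssocScheme Y) (x₀ : X) (y₀ : Y) :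
    Matrix (X × Y) (X × Y) ℂ :=
  ∑ u ∈ wreathRels A B, ((valency u : ℂ)⁻¹) •
    (eps (pointFiber (x₀, y₀) u) * allOnes (X × Y) * eps (pointFiber (x₀, y₀) u))

/-- `ω = e^{2πi/3}`. -/
noncomputable def omega3 : ℂ := Complex.exp (2 * Real.pi * Complex.I / 3)

/-- The shifted matching matrix `∑_i E_{y_{t(i)}, y_{t'(i+k)}}` on `y₀t × y₀t'`. -/
noncomputable def cyc (enum : Finset (Y × Y) → Fin 3 → Y) (t t' : Finset (Y × Y))
    (k : Fin 3) : Matrix Y Y ℂ :=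
  ∑ i : Fin 3, Matrix.single (enum t i) (enum t' (i + k)) 1

/-- `G_{y₀t, y₀t'}`. -/
noncomputable def Gmat (X : Type*) [Fintype X] (enum : Finset (Y × Y) → Fin 3 → Y)
    (t t' : Finset (Y × Y)) : Matrix (X × Y) (X × Y) ℂ :=
  ((3 * (Fintype.card X : ℂ))⁻¹) •
    (allOnes X ⊗ₖ (cyc enum t t' 0 + omega3 • cyc enum t t' 1 + omega3 ^ 2 • cyc enum t t' 2))

/-- `G'_{y₀t, y₀t'}`. -/
noncomputable def Gmat' (X : Type*) [Fintype X] (enum : Finset (Y × Y) → Fin 3 → Y)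
    (t t' : Finset (Y × Y)) : Matrix (X × Y) (X × Y) ℂ :=
  ((3 * (Fintype.card X : ℂ))⁻¹) •
    (allOnes X ⊗ₖ (cyc enum t t' 0 + omega3 ^ 2 • cyc enum t t' 1 + omega3 • cyc enum t t' 2))

/-- `enum` enumerates each set `y₀t` (for non-identity `t`) by `Fin 3`. -/
def IsEnum (B : AssocScheme Y) (y₀ : Y) (enum : Finset (Y × Y) → Fin 3 → Y) : Prop :=
  ∀ t ∈ B.rels, t ≠ diagRel Y →
    Function.Injective (enum t) ∧ ∀ y, y ∈ pointFiber y₀ t ↔ ∃ i, enum t i = y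

/-- The enumerations are well-ordering: every basic relation matrix of the
one-point-extension algebra which is nonzero on `y₀t × y₀t'` restricts there to one of
the cyclic permutation matrices `I, C, C²`. -/
def IsWellOrdering (B : AssocScheme Y) (y₀ : Y) (enum : Finset (Y × Y) → Fin 3 → Y) : Prop :=
  IsEnum B y₀ enum ∧
  ∀ t ∈ B.rels, t ≠ diagRel Y → ∀ t' ∈ B.rels, t' ≠ diagRel Y →
    ∀ M : Matrix Y Y ℂ, IsBasicMatrix (onePointAlg B y₀) M →
      (∃ i j : Fin 3, M (enum t i) (enum t' j) ≠ 0) →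
      ∃ k : Fin 3, ∀ i j : Fin 3,
        M (enum t i) (enum t' j) = if j = i + k then 1 else 0

/-- The set of all matrices `G_{y₀t, y₀t'}`, `t, t' ∈ T₃`. -/
noncomputable def GmatSet (X : Type*) [Fintype X] (B : AssocScheme Y)
    (enum : Finset (Y × Y) → Fin 3 → Y) : Set (Matrix (X × Y) (X × Y) ℂ) :=
  {M | ∃ t ∈ B.rels.erase (diagRel Y), ∃ t' ∈ B.rels.erase (diagRel Y), M = Gmat X enum t t'}

/-- The set of all matrices `G'_{y₀t, y₀t'}`, `t, t' ∈ T₃`. -/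
noncomputable def GmatSet' (X : Type*) [Fintype X] (B : AssocScheme Y)
    (enum : Finset (Y × Y) → Fin 3 → Y) : Set (Matrix (X × Y) (X × Y) ℂ) :=
  {M | ∃ t ∈ B.rels.erase (diagRel Y), ∃ t' ∈ B.rels.erase (diagRel Y), M = Gmat' X enum t t'}

/-- `e_{η1} = ∑_{t ∈ T₃} G_{y₀t, y₀t}`. -/
noncomputable def etaOne (X : Type*) [Fintype X] (B : AssocScheme Y)
    (enum : Finset (Y × Y) → Fin 3 → Y) : Matrix (X × Y) (X × Y) ℂ :=
  ∑ t ∈ B.rels.erase (diagRel Y), Gmat X enum t t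

/-- `e_{η2} = ∑_{t ∈ T₃} G'_{y₀t, y₀t}`. -/
noncomputable def etaTwo (X : Type*) [Fintype X] (B : AssocScheme Y)
    (enum : Finset (Y × Y) → Fin 3 → Y) : Matrix (X × Y) (X × Y) ℂ :=
  ∑ t ∈ B.rels.erase (diagRel Y), Gmat' X enum t t

end Wreath


section MyAux
set_option linter.unusedSectionVars false

variable {X : Type*} [Fintype X] [DecidableEq X]

lemma allOnes_apply (x y : X) : allOnes X x y = 1 := rfl

lemma adjMat_apply (s : Finset (X × X)) (x y : X) :
    adjMat s x y = if (x, y) ∈ s then 1 else 0 := rfl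

lemma eps_apply (U : Finset X) (x y : X) :
    eps U x y = if x = y then (if x ∈ U then (1 : ℂ) else 0) else 0 := by
  simp [eps, Matrix.diagonal_apply]

lemma mem_pointFiber {x y : X} {s : Finset (X × X)} :
    y ∈ pointFiber x s ↔ (x, y) ∈ s := by simp [pointFiber]

lemma mem_convRel {s : Finset (X × X)} {p : X × X} :
    p ∈ convRel s ↔ (p.2, p.1) ∈ s := by
  constructor
  · intro h
    obtain ⟨⟨a, b⟩, hq, hqe⟩ := Finset.mem_image.mp h
    obtain ⟨rfl, rfl⟩ : b = p.1 ∧ a = p.2 := by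
      rw [Prod.ext_iff] at hqe; exact ⟨hqe.1, hqe.2⟩
    simpa using hq
  · intro h
    exact Finset.mem_image.mpr ⟨(p.2, p.1), h, rfl⟩

lemma eps_mul_apply (U : Finset X) (M : Matrix X X ℂ) (x y : X) :
    (eps U * M) x y = (if x ∈ U then 1 else 0) * M x y := by
  rw [Matrix.mul_apply]
  rw [Finset.sum_eq_single x (fun b _ hb => by simp [eps_apply, Ne.symm hb]) (by simp)]
  simp [eps_apply]

lemma mul_eps_apply (U : Finset X) (M : Matrix X X ℂ) (x y : X) :
    (M * eps U) x y = M x y * (if y ∈ U then 1 else 0) := by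
  rw [Matrix.mul_apply]
  rw [Finset.sum_eq_single y (fun b _ hb => by simp [eps_apply, hb]) (by simp)]
  simp [eps_apply]

lemma eps_idem (U : Finset X) : eps U * eps U = eps U := by
  ext x y
  rw [mul_eps_apply, eps_apply]
  by_cases h : y ∈ U <;> by_cases h2 : x = y <;> simp [h, h2]

variable (A : AssocScheme X)

lemma rel_unique {s t : Finset (X × X)} (hs : s ∈ A.rels) (ht : t ∈ A.rels)
    {p : X × X} (hps : p ∈ s) (hpt : p ∈ t) : s = t := by
  by_contra h
  exact (Finset.disjoint_left.mp (A.pairwise_disjoint s hs t ht h) hps) hpt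

noncomputable def relOf (p : X × X) : Finset (X × X) := (A.cover p).choose

lemma relOf_mem (p : X × X) : relOf A p ∈ A.rels := (A.cover p).choose_spec.1

lemma mem_relOf (p : X × X) : p ∈ relOf A p := (A.cover p).choose_spec.2

lemma relOf_eq {s : Finset (X × X)} (hs : s ∈ A.rels) {p : X × X} (hp : p ∈ s) :
    relOf A p = s := rel_unique A (relOf_mem A p) hs (mem_relOf A p) hp

lemma relOf_eq_iff {s : Finset (X × X)} (hs : s ∈ A.rels) {p : X × X} :
    relOf A p = s ↔ p ∈ s :=
  ⟨fun h => h ▸ mem_relOf A p, fun hp => relOf_eq A hs hp⟩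

lemma fib_card {s : Finset (X × X)} (hs : s ∈ A.rels) (x : X) :
    (pointFiber x s).card = valency s := by
  have hconv := A.conv_mem s hs
  have hdne : (diagRel X).Nonempty := A.nonempty_mem _ A.id_mem
  have hxd : (x, x) ∈ diagRel X := by simp [diagRel]
  have had : hdne.choose ∈ diagRel X := hdne.choose_spec
  have ha : hdne.choose.1 = hdne.choose.2 := by
    simpa [diagRel] using had
  have key := A.pconst s hs (convRel s) hconv (diagRel X) A.id_mem (x, x) hxd
    hdne.choose had
  have h1 : (Finset.univ.filter fun z => ((x, x).1, z) ∈ s ∧ (z, (x, x).2) ∈ convRel s)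
      = pointFiber x s := by
    apply Finset.filter_congr
    intro z _
    simp only [mem_convRel]
    tauto
  have h2 : (Finset.univ.filter fun z =>
        (hdne.choose.1, z) ∈ s ∧ (z, hdne.choose.2) ∈ convRel s)
      = pointFiber hdne.choose.1 s := by
    apply Finset.filter_congr
    intro z _
    simp only [mem_convRel, ← ha]
    tauto
  rw [h1, h2] at key
  rw [key]
  unfold valency pNum
  rw [dif_pos hdne]
  rw [← h2]

lemma valency_pos {s : Finset (X × X)} (hs : s ∈ A.rels) : 0 < valency s := by
  obtain ⟨⟨a, b⟩, hab⟩ := A.nonempty_mem s hs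
  rw [← fib_card A hs a]
  exact Finset.card_pos.mpr ⟨b, mem_pointFiber.mpr hab⟩

lemma valency_ne_zero {s : Finset (X × X)} (hs : s ∈ A.rels) : (valency s : ℂ) ≠ 0 :=
  Nat.cast_ne_zero.mpr (valency_pos A hs).ne'

lemma sum_adjMat : ∑ s ∈ A.rels, adjMat s = allOnes X := by
  ext x y
  rw [Matrix.sum_apply]
  rw [Finset.sum_eq_single (relOf A (x, y))
    (fun s hs hne => by
      rw [adjMat_apply, if_neg]
      intro hmem
      exact hne (rel_unique A hs (relOf_mem A (x, y)) hmem (mem_relOf A (x, y))))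
    (fun h => absurd (relOf_mem A (x, y)) h)]
  rw [adjMat_apply, if_pos (mem_relOf A (x, y)), allOnes_apply]

variable (x₀ : X)

lemma sum_eps : ∑ s ∈ A.rels, eps (pointFiber x₀ s) = (1 : Matrix X X ℂ) := by
  ext x y
  rw [Matrix.sum_apply]
  by_cases hxy : x = y
  · subst hxy
    rw [Finset.sum_eq_single (relOf A (x₀, x))
      (fun s hs hne => by
        rw [eps_apply, if_pos rfl, if_neg]
        intro hmem
        exact hne (rel_unique A hs (relOf_mem A (x₀, x)) (mem_pointFiber.mp hmem)
          (mem_relOf A (x₀, x))))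
      (fun h => absurd (relOf_mem A (x₀, x)) h)]
    rw [eps_apply, if_pos rfl,
      if_pos (mem_pointFiber.mpr (mem_relOf A (x₀, x))), Matrix.one_apply_eq]
  · rw [Matrix.one_apply_ne hxy]
    exact Finset.sum_eq_zero fun s _ => by rw [eps_apply, if_neg hxy]

lemma fiber_mul_fiber {s t : Finset (X × X)} (hs : s ∈ A.rels) (ht : t ∈ A.rels)
    (hne : s ≠ t) : eps (pointFiber x₀ s) * eps (pointFiber x₀ t) = 0 := by
  ext x y
  rw [mul_eps_apply, eps_apply]
  by_cases hxy : x = y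
  · subst hxy
    by_cases hx : x ∈ pointFiber x₀ s
    · rw [if_pos rfl, if_pos hx, if_neg, mul_zero]
      · rfl
      · intro hy
        exact hne (rel_unique A hs ht (mem_pointFiber.mp hx) (mem_pointFiber.mp hy))
    · rw [if_pos rfl, if_neg hx, zero_mul]; rfl
  · rw [if_neg hxy, zero_mul]; rfl

lemma J_eps_J {s : Finset (X × X)} (hs : s ∈ A.rels) :
    allOnes X * eps (pointFiber x₀ s) * allOnes X = (valency s : ℂ) • allOnes X := by
  have h1 : ∀ x z : X, (allOnes X * eps (pointFiber x₀ s)) x z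
      = if z ∈ pointFiber x₀ s then 1 else 0 := by
    intro x z
    rw [mul_eps_apply, allOnes_apply, one_mul]
  ext x y
  rw [Matrix.mul_apply]
  simp only [h1, allOnes_apply, mul_one]
  rw [Finset.sum_ite_mem, Finset.univ_inter, Finset.sum_const, fib_card A hs x₀]
  simp [allOnes_apply]

lemma eps_J_eps_apply (U : Finset X) (x y : X) :
    (eps U * allOnes X * eps U) x y
      = (if x ∈ U then 1 else 0) * (if y ∈ U then 1 else 0) := by
  rw [mul_eps_apply, eps_mul_apply, allOnes_apply, mul_one]

lemma e0_apply' (x y : X) :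
    trivTerwIdem A x₀ x y =
      if relOf A (x₀, x) = relOf A (x₀, y) then
        ((valency (relOf A (x₀, y)) : ℂ))⁻¹ else 0 := by
  unfold trivTerwIdem
  rw [Matrix.sum_apply]
  rw [Finset.sum_eq_single (relOf A (x₀, x))
    (fun s hs hne => by
      rw [Matrix.smul_apply, eps_J_eps_apply]
      rw [if_neg, zero_mul, smul_zero]
      intro hmem
      exact hne (rel_unique A hs (relOf_mem A (x₀, x)) (mem_pointFiber.mp hmem)
        (mem_relOf A (x₀, x))))
    (fun h => absurd (relOf_mem A (x₀, x)) h)]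
  rw [Matrix.smul_apply, eps_J_eps_apply,
    if_pos (mem_pointFiber.mpr (mem_relOf A (x₀, x))), one_mul]
  by_cases h : relOf A (x₀, x) = relOf A (x₀, y)
  · rw [if_pos h, if_pos, smul_eq_mul, mul_one, h]
    rw [mem_pointFiber, h]
    exact mem_relOf A (x₀, y)
  · rw [if_neg h, if_neg, smul_eq_mul, mul_zero]
    rw [mem_pointFiber]
    intro hmem
    exact h ((relOf_eq A (relOf_mem A (x₀, x)) hmem).symm)

lemma e0_apply'' (x y : X) :
    trivTerwIdem A x₀ x y =
      if relOf A (x₀, x) = relOf A (x₀, y) then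
        ((valency (relOf A (x₀, x)) : ℂ))⁻¹ else 0 := by
  rw [e0_apply']
  by_cases h : relOf A (x₀, x) = relOf A (x₀, y)
  · rw [if_pos h, if_pos h, h]
  · rw [if_neg h, if_neg h]

lemma J_mem : allOnes X ∈ terwAlg A x₀ := by
  rw [← sum_adjMat A]
  exact Subalgebra.sum_mem _ fun s hs => Algebra.subset_adjoin (Or.inl ⟨s, hs, rfl⟩)

lemma epsFib_mem {s : Finset (X × X)} (hs : s ∈ A.rels) :
    eps (pointFiber x₀ s) ∈ terwAlg A x₀ :=
  Algebra.subset_adjoin (Or.inr ⟨s, hs, rfl⟩)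

lemma adjMat_mem {s : Finset (X × X)} (hs : s ∈ A.rels) :
    adjMat s ∈ terwAlg A x₀ :=
  Algebra.subset_adjoin (Or.inl ⟨s, hs, rfl⟩)

lemma e0_mem : trivTerwIdem A x₀ ∈ terwAlg A x₀ := by
  unfold trivTerwIdem
  exact Subalgebra.sum_mem _ fun s hs => Subalgebra.smul_mem _
    (mul_mem (mul_mem (epsFib_mem A x₀ hs) (J_mem A x₀)) (epsFib_mem A x₀ hs)) _

lemma e0_mul_J : trivTerwIdem A x₀ * allOnes X = allOnes X := by
  unfold trivTerwIdem
  rw [Finset.sum_mul]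
  have key : ∀ s ∈ A.rels,
      ((valency s : ℂ))⁻¹ • (eps (pointFiber x₀ s) * allOnes X * eps (pointFiber x₀ s))
        * allOnes X = eps (pointFiber x₀ s) * allOnes X := by
    intro s hs
    set E := eps (pointFiber x₀ s)
    have h1 : (E * allOnes X * E) * allOnes X = E * ((allOnes X * E * allOnes X)) := by
      simp only [mul_assoc]
    rw [smul_mul_assoc, h1, J_eps_J A x₀ hs, mul_smul_comm, smul_smul,
      inv_mul_cancel₀ (valency_ne_zero A hs), one_smul]
  rw [Finset.sum_congr rfl key, ← Finset.sum_mul, sum_eps A x₀, one_mul]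

lemma J_mul_e0 : allOnes X * trivTerwIdem A x₀ = allOnes X := by
  unfold trivTerwIdem
  rw [Finset.mul_sum]
  have key : ∀ s ∈ A.rels,
      allOnes X * (((valency s : ℂ))⁻¹ •
        (eps (pointFiber x₀ s) * allOnes X * eps (pointFiber x₀ s)))
        = allOnes X * eps (pointFiber x₀ s) := by
    intro s hs
    set E := eps (pointFiber x₀ s)
    have h1 : allOnes X * (E * allOnes X * E) = (allOnes X * E * allOnes X) * E := by
      simp only [mul_assoc]
    rw [mul_smul_comm, h1, J_eps_J A x₀ hs, smul_mul_assoc, smul_smul,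
      inv_mul_cancel₀ (valency_ne_zero A hs), one_smul]
  rw [Finset.sum_congr rfl key, ← Finset.mul_sum, sum_eps A x₀, mul_one]

lemma e0_idem : trivTerwIdem A x₀ * trivTerwIdem A x₀ = trivTerwIdem A x₀ := by
  unfold trivTerwIdem
  rw [Finset.sum_mul_sum]
  apply Finset.sum_congr rfl
  intro s hs
  rw [Finset.sum_eq_single s (fun t ht htne => ?_) (fun h => absurd hs h)]
  · set E := eps (pointFiber x₀ s)
    have h1 : (E * allOnes X * E) * (E * allOnes X * E)
        = E * (allOnes X * ((E * E) * (allOnes X * E))) := by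
      simp only [mul_assoc]
    have key : (E * allOnes X * E) * (E * allOnes X * E)
        = (valency s : ℂ) • (E * allOnes X * E) := by
      rw [h1, eps_idem]
      have h2 : E * (allOnes X * (E * (allOnes X * E)))
          = E * ((allOnes X * E * allOnes X) * E) := by
        simp only [mul_assoc]
      rw [h2, J_eps_J A x₀ hs, smul_mul_assoc, mul_smul_comm, mul_assoc]
    rw [smul_mul_assoc, mul_smul_comm, key, smul_smul, smul_smul,
      mul_assoc, inv_mul_cancel₀ (valency_ne_zero A hs), mul_one]
  · set E := eps (pointFiber x₀ s)
    set F := eps (pointFiber x₀ t)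
    have h0 : E * F = 0 := fiber_mul_fiber A x₀ hs ht (Ne.symm htne)
    have h1 : (E * allOnes X * E) * (F * allOnes X * F)
        = (E * allOnes X) * ((E * F) * (allOnes X * F)) := by
      simp only [mul_assoc]
    rw [smul_mul_assoc, mul_smul_comm, h1, h0, zero_mul, mul_zero, smul_zero, smul_zero]

lemma doubleCount {r q u : Finset (X × X)} (hr : r ∈ A.rels) (hq : q ∈ A.rels)
    (hu : u ∈ A.rels) {x y : X} (hx : (x₀, x) ∈ r) (hy : (x₀, y) ∈ q) :
    valency r * (Finset.univ.filter fun z => (x₀, z) ∈ q ∧ (x, z) ∈ u).card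
      = valency q * (Finset.univ.filter fun z => (x₀, z) ∈ r ∧ (z, y) ∈ u).card := by
  have hconvu := A.conv_mem u hu
  have h1 : ∀ a : X, (x₀, a) ∈ r →
      (Finset.univ.filter fun b => (x₀, b) ∈ q ∧ (a, b) ∈ u).card
        = (Finset.univ.filter fun z => (x₀, z) ∈ q ∧ (x, z) ∈ u).card := by
    intro a ha
    have key := A.pconst q hq (convRel u) hconvu r hr (x₀, a) ha (x₀, x) hx
    have e1 : (Finset.univ.filter fun z => ((x₀, a).1, z) ∈ q ∧ (z, (x₀, a).2) ∈ convRel u)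
        = Finset.univ.filter fun b => (x₀, b) ∈ q ∧ (a, b) ∈ u := by
      apply Finset.filter_congr; intro z _; rw [mem_convRel]
    have e2 : (Finset.univ.filter fun z => ((x₀, x).1, z) ∈ q ∧ (z, (x₀, x).2) ∈ convRel u)
        = Finset.univ.filter fun z => (x₀, z) ∈ q ∧ (x, z) ∈ u := by
      apply Finset.filter_congr; intro z _; rw [mem_convRel]
    rw [e1, e2] at key
    exact key
  have h2 : ∀ b : X, (x₀, b) ∈ q →
      (Finset.univ.filter fun a => (x₀, a) ∈ r ∧ (a, b) ∈ u).card
        = (Finset.univ.filter fun z => (x₀, z) ∈ r ∧ (z, y) ∈ u).card := by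
    intro b hb
    exact A.pconst r hr u hu q hq (x₀, b) hb (x₀, y) hy
  have lhs : valency r * (Finset.univ.filter fun z => (x₀, z) ∈ q ∧ (x, z) ∈ u).card
      = ∑ a : X, ∑ b : X, if (x₀, a) ∈ r ∧ (x₀, b) ∈ q ∧ (a, b) ∈ u then 1 else 0 := by
    rw [← fib_card A hr x₀]
    calc (pointFiber x₀ r).card *
          (Finset.univ.filter fun z => (x₀, z) ∈ q ∧ (x, z) ∈ u).card
        = ∑ _a ∈ pointFiber x₀ r,
            (Finset.univ.filter fun z => (x₀, z) ∈ q ∧ (x, z) ∈ u).card := by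
          rw [Finset.sum_const, smul_eq_mul]
      _ = ∑ a ∈ pointFiber x₀ r,
            (Finset.univ.filter fun b => (x₀, b) ∈ q ∧ (a, b) ∈ u).card := by
          exact Finset.sum_congr rfl fun a ha => (h1 a (mem_pointFiber.mp ha)).symm
      _ = ∑ a : X, if (x₀, a) ∈ r then
            (Finset.univ.filter fun b => (x₀, b) ∈ q ∧ (a, b) ∈ u).card else 0 := by
          rw [← Finset.sum_filter]; rfl
      _ = ∑ a : X, ∑ b : X, if (x₀, a) ∈ r ∧ (x₀, b) ∈ q ∧ (a, b) ∈ u then 1 else 0 := by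
          apply Finset.sum_congr rfl
          intro a _
          by_cases ha : (x₀, a) ∈ r
          · rw [if_pos ha, Finset.card_filter]
            exact Finset.sum_congr rfl fun b _ => by simp [ha]
          · rw [if_neg ha]
            exact (Finset.sum_eq_zero fun b _ => by simp [ha]).symm
  have rhs : valency q * (Finset.univ.filter fun z => (x₀, z) ∈ r ∧ (z, y) ∈ u).card
      = ∑ b : X, ∑ a : X, if (x₀, a) ∈ r ∧ (x₀, b) ∈ q ∧ (a, b) ∈ u then 1 else 0 := by
    rw [← fib_card A hq x₀]
    calc (pointFiber x₀ q).card *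
          (Finset.univ.filter fun z => (x₀, z) ∈ r ∧ (z, y) ∈ u).card
        = ∑ _b ∈ pointFiber x₀ q,
            (Finset.univ.filter fun z => (x₀, z) ∈ r ∧ (z, y) ∈ u).card := by
          rw [Finset.sum_const, smul_eq_mul]
      _ = ∑ b ∈ pointFiber x₀ q,
            (Finset.univ.filter fun a => (x₀, a) ∈ r ∧ (a, b) ∈ u).card := by
          exact Finset.sum_congr rfl fun b hb => (h2 b (mem_pointFiber.mp hb)).symm
      _ = ∑ b : X, if (x₀, b) ∈ q then
            (Finset.univ.filter fun a => (x₀, a) ∈ r ∧ (a, b) ∈ u).card else 0 := by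
          rw [← Finset.sum_filter]; rfl
      _ = ∑ b : X, ∑ a : X, if (x₀, a) ∈ r ∧ (x₀, b) ∈ q ∧ (a, b) ∈ u then 1 else 0 := by
          apply Finset.sum_congr rfl
          intro b _
          by_cases hb : (x₀, b) ∈ q
          · rw [if_pos hb, Finset.card_filter]
            exact Finset.sum_congr rfl fun a _ => by simp [hb, and_comm, and_assoc]
          · rw [if_neg hb]
            exact (Finset.sum_eq_zero fun a _ => by simp [hb]).symm
  rw [lhs, rhs, Finset.sum_comm]

lemma adj_mul_e0_apply {u : Finset (X × X)} (hu : u ∈ A.rels) (x y : X) :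
    (adjMat u * trivTerwIdem A x₀) x y
      = ((valency (relOf A (x₀, y)) : ℂ))⁻¹ *
        ((Finset.univ.filter fun z => (x₀, z) ∈ relOf A (x₀, y) ∧ (x, z) ∈ u).card : ℂ) := by
  set q := relOf A (x₀, y) with hqdef
  have hq : q ∈ A.rels := relOf_mem A (x₀, y)
  rw [Matrix.mul_apply]
  have step : ∀ z : X, adjMat u x z * trivTerwIdem A x₀ z y
      = if (x₀, z) ∈ q ∧ (x, z) ∈ u then ((valency q : ℂ))⁻¹ else 0 := by
    intro z
    rw [adjMat_apply, e0_apply', ← hqdef]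
    by_cases h1 : (x, z) ∈ u <;> by_cases h2 : (x₀, z) ∈ q <;>
      simp [h1, h2, relOf_eq_iff A hq]
  rw [Finset.sum_congr rfl fun z _ => step z]
  rw [← Finset.sum_filter, Finset.sum_const, nsmul_eq_mul, mul_comm]

lemma e0_mul_adj_apply {u : Finset (X × X)} (hu : u ∈ A.rels) (x y : X) :
    (trivTerwIdem A x₀ * adjMat u) x y
      = ((valency (relOf A (x₀, x)) : ℂ))⁻¹ *
        ((Finset.univ.filter fun z => (x₀, z) ∈ relOf A (x₀, x) ∧ (z, y) ∈ u).card : ℂ) := by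
  set r := relOf A (x₀, x) with hrdef
  have hr : r ∈ A.rels := relOf_mem A (x₀, x)
  rw [Matrix.mul_apply]
  have step : ∀ z : X, trivTerwIdem A x₀ x z * adjMat u z y
      = if (x₀, z) ∈ r ∧ (z, y) ∈ u then ((valency r : ℂ))⁻¹ else 0 := by
    intro z
    have hiff : (r = relOf A (x₀, z)) ↔ (x₀, z) ∈ r :=
      ⟨fun h => h ▸ mem_relOf A (x₀, z), fun hp => (relOf_eq A hr hp).symm⟩
    rw [adjMat_apply, e0_apply'', ← hrdef]
    by_cases h1 : (z, y) ∈ u <;> by_cases h2 : (x₀, z) ∈ r <;>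
      simp [h1, h2, hiff]
  rw [Finset.sum_congr rfl fun z _ => step z]
  rw [← Finset.sum_filter, Finset.sum_const, nsmul_eq_mul, mul_comm]

lemma e0_comm_adj {u : Finset (X × X)} (hu : u ∈ A.rels) :
    adjMat u * trivTerwIdem A x₀ = trivTerwIdem A x₀ * adjMat u := by
  ext x y
  rw [adj_mul_e0_apply A x₀ hu, e0_mul_adj_apply A x₀ hu]
  have hr : relOf A (x₀, x) ∈ A.rels := relOf_mem _ _
  have hq : relOf A (x₀, y) ∈ A.rels := relOf_mem _ _
  have hdc := doubleCount A x₀ hr hq hu (mem_relOf A (x₀, x)) (mem_relOf A (x₀, y))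
  have hdcC : (valency (relOf A (x₀, x)) : ℂ) *
        ((Finset.univ.filter fun z => (x₀, z) ∈ relOf A (x₀, y) ∧ (x, z) ∈ u).card : ℂ)
      = (valency (relOf A (x₀, y)) : ℂ) *
        ((Finset.univ.filter fun z => (x₀, z) ∈ relOf A (x₀, x) ∧ (z, y) ∈ u).card : ℂ) := by
    exact_mod_cast hdc
  field_simp [valency_ne_zero A hr, valency_ne_zero A hq]
  linear_combination hdcC

lemma e0_comm_eps {u : Finset (X × X)} (hu : u ∈ A.rels) :
    eps (pointFiber x₀ u) * trivTerwIdem A x₀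
      = trivTerwIdem A x₀ * eps (pointFiber x₀ u) := by
  ext x y
  by_cases h : relOf A (x₀, x) = relOf A (x₀, y)
  · rw [eps_mul_apply, mul_eps_apply, e0_apply', if_pos h]
    have hiff : (x ∈ pointFiber x₀ u) ↔ (y ∈ pointFiber x₀ u) := by
      rw [mem_pointFiber, mem_pointFiber, ← relOf_eq_iff A hu, ← relOf_eq_iff A hu, h]
    by_cases hx : x ∈ pointFiber x₀ u
    · rw [if_pos hx, if_pos (hiff.mp hx), one_mul, mul_one]
    · rw [if_neg hx, if_neg (fun hy => hx (hiff.mpr hy)), zero_mul, mul_zero]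
  · rw [eps_mul_apply, mul_eps_apply, e0_apply', if_neg h, mul_zero, zero_mul]

lemma e0_comm : ∀ a ∈ terwAlg A x₀, a * trivTerwIdem A x₀ = trivTerwIdem A x₀ * a := by
  intro a ha
  induction ha using Algebra.adjoin_induction with
  | mem x hx =>
    rcases hx with ⟨s, hs, rfl⟩ | ⟨s, hs, rfl⟩
    · exact e0_comm_adj A x₀ hs
    · exact e0_comm_eps A x₀ hs
  | algebraMap r =>
    rw [Algebra.algebraMap_eq_smul_one, smul_mul_assoc, one_mul, mul_smul_comm, mul_one]
  | add x y hx hy ihx ihy => rw [add_mul, mul_add, ihx, ihy]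
  | mul x y hx hy ihx ihy => rw [mul_assoc, ihy, ← mul_assoc, ihx, mul_assoc]

lemma eq_trivIdem {e : Matrix X X ℂ}
    (hcomm : ∀ a ∈ terwAlg A x₀, a * e = e * a)
    (hidem : e * e = e)
    (hsub : e * trivTerwIdem A x₀ = e)
    (hne0 : e ≠ 0) : e = trivTerwIdem A x₀ := by
  -- off-diagonal-block entries vanish
  have hoff : ∀ x y : X, relOf A (x₀, x) ≠ relOf A (x₀, y) → e x y = 0 := by
    intro x y hne
    have hu : relOf A (x₀, x) ∈ A.rels := relOf_mem _ _
    have hc := hcomm _ (epsFib_mem A x₀ hu)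
    have hentry := congrFun (congrFun hc x) y
    have hy : y ∉ pointFiber x₀ (relOf A (x₀, x)) := by
      rw [mem_pointFiber]
      intro hmem
      exact hne ((relOf_eq A hu hmem).symm)
    rw [eps_mul_apply, mul_eps_apply,
      if_pos (mem_pointFiber.mpr (mem_relOf A (x₀, x))), one_mul, if_neg hy,
      mul_zero] at hentry
    exact hentry
  have hc0 : trivTerwIdem A x₀ * e = e * trivTerwIdem A x₀ :=
    hcomm _ (e0_mem A x₀)
  have hfull : trivTerwIdem A x₀ * e * trivTerwIdem A x₀ = e := by
    rw [hc0, mul_assoc, e0_idem, hsub]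
  -- block constancy
  have hconst : ∀ x y x' y' : X, relOf A (x₀, x) = relOf A (x₀, x') →
      relOf A (x₀, y) = relOf A (x₀, y') → e x y = e x' y' := by
    have hF : ∀ x y : X, e x y = ∑ w : X, (∑ z : X,
        (if relOf A (x₀, x) = relOf A (x₀, z) then
          ((valency (relOf A (x₀, z)) : ℂ))⁻¹ else 0) * e z w)
        * (if relOf A (x₀, w) = relOf A (x₀, y) then
          ((valency (relOf A (x₀, w)) : ℂ))⁻¹ else 0) := by
      intro x y
      conv_lhs => rw [← hfull]
      rw [Matrix.mul_apply]
      apply Finset.sum_congr rfl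
      intro w _
      rw [e0_apply'']
      congr 1
      rw [Matrix.mul_apply]
      apply Finset.sum_congr rfl
      intro z _
      rw [e0_apply']
    intro x y x' y' hx hy
    rw [hF x y, hF x' y']
    simp only [hx, hy]
  -- dichotomy for block values
  have hdich : ∀ x y : X, relOf A (x₀, x) = relOf A (x₀, y) →
      e x y = 0 ∨ e x y = ((valency (relOf A (x₀, x)) : ℂ))⁻¹ := by
    intro x y hxy
    have h1 : e x y = (e x y * e x y) * (valency (relOf A (x₀, x)) : ℂ) := by
      conv_lhs => rw [← hidem]
      rw [Matrix.mul_apply]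
      have hterm : ∀ z : X, e x z * e z y
          = if relOf A (x₀, z) = relOf A (x₀, x) then e x y * e x y else 0 := by
        intro z
        by_cases hz : relOf A (x₀, z) = relOf A (x₀, x)
        · rw [if_pos hz, hconst x z x y rfl (hz.trans hxy), hconst z y x y hz rfl]
        · rw [if_neg hz, hoff x z (fun h => hz h.symm), zero_mul]
      rw [Finset.sum_congr rfl fun z _ => hterm z, ← Finset.sum_filter,
        Finset.sum_const, nsmul_eq_mul, mul_comm]
      congr 1
      have hfilt : (Finset.univ.filter fun z => relOf A (x₀, z) = relOf A (x₀, x))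
          = pointFiber x₀ (relOf A (x₀, x)) := by
        apply Finset.filter_congr
        intro z _
        exact relOf_eq_iff A (relOf_mem A (x₀, x))
      rw [hfilt, fib_card A (relOf_mem A (x₀, x)) x₀]
    by_cases h0 : e x y = 0
    · exact Or.inl h0
    · right
      have h2 : e x y * 1 = e x y * (e x y * (valency (relOf A (x₀, x)) : ℂ)) := by
        rw [mul_one]
        conv_lhs => rw [h1]
        ring
      have h3 := mul_left_cancel₀ h0 h2
      have h4 : (valency (relOf A (x₀, x)) : ℂ) * e x y = 1 := by
        linear_combination -h3
      exact (inv_eq_of_mul_eq_one_right h4).symm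
  -- nonzero witness
  obtain ⟨x1, y1, hx1y1⟩ : ∃ x y, e x y ≠ 0 := by
    by_contra hcon
    push_neg at hcon
    exact hne0 (by ext x y; rw [hcon x y, Matrix.zero_apply])
  have hr1 : relOf A (x₀, x1) = relOf A (x₀, y1) := by
    by_contra hcon
    exact hx1y1 (hoff _ _ hcon)
  -- all diagonal entries are nonzero
  have hdiag : ∀ b : X, e b b ≠ 0 := by
    intro b
    have hu : relOf A (b, x1) ∈ A.rels := relOf_mem _ _
    have hc := hcomm _ (adjMat_mem A x₀ hu)
    have hentry := congrFun (congrFun hc b) x1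
    have hL : (adjMat (relOf A (b, x1)) * e) b x1
        = e x1 y1 * ((Finset.univ.filter fun z => (b, z) ∈ relOf A (b, x1)
            ∧ relOf A (x₀, z) = relOf A (x₀, x1)).card : ℂ) := by
      rw [Matrix.mul_apply]
      have hterm : ∀ z : X, adjMat (relOf A (b, x1)) b z * e z x1
          = if (b, z) ∈ relOf A (b, x1) ∧ relOf A (x₀, z) = relOf A (x₀, x1)
            then e x1 y1 else 0 := by
        intro z
        rw [adjMat_apply]
        by_cases h1 : (b, z) ∈ relOf A (b, x1) <;>
          by_cases h2 : relOf A (x₀, z) = relOf A (x₀, x1)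
        · rw [if_pos h1, if_pos ⟨h1, h2⟩, one_mul]
          exact hconst z x1 x1 y1 h2 hr1
        · rw [if_pos h1, if_neg (fun hc' => h2 hc'.2), one_mul]
          exact hoff z x1 h2
        · rw [if_neg h1, if_neg (fun hc' => h1 hc'.1), zero_mul]
        · rw [if_neg h1, if_neg (fun hc' => h1 hc'.1), zero_mul]
      rw [Finset.sum_congr rfl fun z _ => hterm z, ← Finset.sum_filter,
        Finset.sum_const, nsmul_eq_mul, mul_comm]
    have hR : (e * adjMat (relOf A (b, x1))) b x1
        = e b b * ((Finset.univ.filter fun z => relOf A (x₀, z) = relOf A (x₀, b)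
            ∧ (z, x1) ∈ relOf A (b, x1)).card : ℂ) := by
      rw [Matrix.mul_apply]
      have hterm : ∀ z : X, e b z * adjMat (relOf A (b, x1)) z x1
          = if relOf A (x₀, z) = relOf A (x₀, b) ∧ (z, x1) ∈ relOf A (b, x1)
            then e b b else 0 := by
        intro z
        rw [adjMat_apply]
        by_cases h1 : (z, x1) ∈ relOf A (b, x1) <;>
          by_cases h2 : relOf A (x₀, z) = relOf A (x₀, b)
        · rw [if_pos h1, if_pos ⟨h2, h1⟩, mul_one]
          exact hconst b z b b rfl h2
        · rw [if_pos h1, if_neg (fun hc' => h2 hc'.1), mul_one]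
          exact hoff b z (fun h => h2 h.symm)
        · rw [if_neg h1, if_neg (fun hc' => h1 hc'.2), mul_zero]
        · rw [if_neg h1, if_neg (fun hc' => h1 hc'.2), mul_zero]
      rw [Finset.sum_congr rfl fun z _ => hterm z, ← Finset.sum_filter,
        Finset.sum_const, nsmul_eq_mul, mul_comm]
    rw [hL, hR] at hentry
    have hkne : ((Finset.univ.filter fun z => (b, z) ∈ relOf A (b, x1)
        ∧ relOf A (x₀, z) = relOf A (x₀, x1)).card : ℂ) ≠ 0 := by
      rw [Nat.cast_ne_zero]
      refine (Finset.card_pos.mpr ⟨x1, ?_⟩).ne'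
      simp [mem_relOf A (b, x1)]
    intro hbb
    rw [hbb, zero_mul] at hentry
    exact (mul_ne_zero hx1y1 hkne) hentry
  -- conclude
  ext x y
  by_cases h : relOf A (x₀, x) = relOf A (x₀, y)
  · rw [e0_apply', if_pos h, hconst x y y y h rfl]
    rcases hdich y y rfl with h0 | hv
    · exact absurd h0 (hdiag y)
    · rw [hv]
  · rw [e0_apply', if_neg h]
    exact hoff x y h

lemma eJ_zero {e : Matrix X X ℂ}
    (he : IsCPI (terwAlg A x₀ : Set (Matrix X X ℂ)) e)
    (hne : e ≠ trivTerwIdem A x₀) :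
    e * allOnes X = 0 ∧ allOnes X * e = 0 := by
  obtain ⟨heT, hne0, hidem, hcomm, hprim⟩ := he
  have he0T : trivTerwIdem A x₀ ∈ terwAlg A x₀ := e0_mem A x₀
  have hc : trivTerwIdem A x₀ * e = e * trivTerwIdem A x₀ := hcomm _ he0T
  by_cases hf0 : e * trivTerwIdem A x₀ = 0
  · constructor
    · rw [← e0_mul_J A x₀, ← mul_assoc, hf0, zero_mul]
    · rw [← J_mul_e0 A x₀, mul_assoc, hc, hf0, mul_zero]
  · by_cases hg0 : e - e * trivTerwIdem A x₀ = 0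
    · exact absurd (eq_trivIdem A x₀ hcomm hidem (sub_eq_zero.mp hg0).symm hne0) hne
    · exfalso
      apply hprim
      have hef : e * (e * trivTerwIdem A x₀) = e * trivTerwIdem A x₀ := by
        rw [← mul_assoc, hidem]
      have hfe : (e * trivTerwIdem A x₀) * e = e * trivTerwIdem A x₀ := by
        rw [← hc, mul_assoc, hidem, hc]
      have hff : (e * trivTerwIdem A x₀) * (e * trivTerwIdem A x₀)
          = e * trivTerwIdem A x₀ := by
        rw [← mul_assoc, hfe, mul_assoc, e0_idem]
      refine ⟨e * trivTerwIdem A x₀, e - e * trivTerwIdem A x₀,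
        mul_mem heT he0T, sub_mem heT (mul_mem heT he0T), hf0, hg0, hff,
        ?_, ?_, ?_, ?_, ?_, ?_⟩
      · rw [mul_sub, sub_mul, sub_mul, hidem, hef, hfe, hff]
        abel
      · intro a ha
        rw [← mul_assoc, hcomm a ha, mul_assoc, e0_comm A x₀ a ha, ← mul_assoc]
      · intro a ha
        rw [mul_sub, sub_mul, hcomm a ha, ← mul_assoc, hcomm a ha, mul_assoc,
          e0_comm A x₀ a ha, ← mul_assoc]
      · rw [mul_sub, hfe, hff, sub_self]
      · rw [sub_mul, hef, hff, sub_self]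
      · abel

end MyAux


section MyWreath
set_option linter.unusedSectionVars false

variable {X Y : Type*} [Fintype X] [DecidableEq X] [Fintype Y] [DecidableEq Y]

lemma kron_eps_mul (y₀ : Y) (a b : Matrix X X ℂ) :
    (a ⊗ₖ eps ({y₀} : Finset Y)) * (b ⊗ₖ eps ({y₀} : Finset Y))
      = (a * b) ⊗ₖ eps ({y₀} : Finset Y) := by
  rw [← Matrix.mul_kronecker_mul, eps_idem]

lemma kron_inj {y₀ : Y} {a b : Matrix X X ℂ}
    (h : a ⊗ₖ eps ({y₀} : Finset Y) = b ⊗ₖ eps ({y₀} : Finset Y)) : a = b := by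
  ext i j
  have h2 := congrFun (congrFun h (i, y₀)) (j, y₀)
  rw [Matrix.kroneckerMap_apply, Matrix.kroneckerMap_apply] at h2
  simpa [eps_apply] using h2

lemma sum_kron {ι : Type*} (s : Finset ι) (f : ι → Matrix X X ℂ) (N : Matrix Y Y ℂ) :
    (∑ i ∈ s, f i) ⊗ₖ N = ∑ i ∈ s, (f i ⊗ₖ N) := by
  ext ⟨i, k⟩ ⟨j, l⟩
  simp [Matrix.kroneckerMap_apply, Matrix.sum_apply, Finset.sum_mul]

variable (A : AssocScheme X) (B : AssocScheme Y) (x₀ : X) (y₀ : Y)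

lemma one_kron_mem :
    (1 : Matrix X X ℂ) ⊗ₖ eps ({y₀} : Finset Y) ∈ wreathTerw A B x₀ y₀ := by
  rw [← sum_eps A x₀, sum_kron]
  exact Subalgebra.sum_mem _ fun s hs =>
    Algebra.subset_adjoin (Or.inl (Or.inl (Or.inr ⟨s, hs, rfl⟩)))

lemma mem_TW {c : Matrix X X ℂ} (hc : c ∈ terwAlg A x₀) :
    c ⊗ₖ eps ({y₀} : Finset Y) ∈ wreathTerw A B x₀ y₀ := by
  induction hc using Algebra.adjoin_induction with
  | mem x hx =>
    rcases hx with ⟨s, hs, rfl⟩ | ⟨s, hs, rfl⟩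
    · have h1 : adjMat s ⊗ₖ eps ({y₀} : Finset Y)
          = (adjMat s ⊗ₖ (1 : Matrix Y Y ℂ))
            * ((1 : Matrix X X ℂ) ⊗ₖ eps ({y₀} : Finset Y)) := by
        rw [← Matrix.mul_kronecker_mul, mul_one, one_mul]
      rw [h1]
      exact mul_mem (Algebra.subset_adjoin (Or.inl (Or.inl (Or.inl ⟨s, hs, rfl⟩))))
        (one_kron_mem A B x₀ y₀)
    · exact Algebra.subset_adjoin (Or.inl (Or.inl (Or.inr ⟨s, hs, rfl⟩)))
  | algebraMap r =>
    rw [Algebra.algebraMap_eq_smul_one, Matrix.smul_kronecker]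
    exact Subalgebra.smul_mem _ (one_kron_mem A B x₀ y₀) _
  | add x y hx hy ihx ihy =>
    rw [Matrix.add_kronecker]
    exact add_mem ihx ihy
  | mul x y hx hy ihx ihy =>
    rw [← kron_eps_mul]
    exact mul_mem ihx ihy

lemma epsT_mul_eps {t : Finset (Y × Y)} (ht : t ∈ B.rels) (htne : t ≠ diagRel Y) :
    eps (pointFiber y₀ t) * eps ({y₀} : Finset Y) = 0 := by
  have hy : y₀ ∉ pointFiber y₀ t := by
    rw [mem_pointFiber]
    intro hmem
    have hd : (y₀, y₀) ∈ diagRel Y := by simp [diagRel]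
    exact (Finset.disjoint_left.mp
      (B.pairwise_disjoint t ht (diagRel Y) B.id_mem htne) hmem) hd
  ext u v
  rw [mul_eps_apply, eps_apply, Matrix.zero_apply]
  by_cases h2 : v ∈ ({y₀} : Finset Y)
  · have hv : v = y₀ := by simpa using h2
    subst hv
    rw [if_pos h2, mul_one]
    by_cases h1 : u = v
    · subst h1; rw [if_pos rfl, if_neg hy]
    · rw [if_neg h1]
  · rw [if_neg h2, mul_zero]

lemma eps_comm (U V : Finset Y) : eps U * eps V = eps V * eps U := by
  unfold eps
  rw [Matrix.diagonal_mul_diagonal, Matrix.diagonal_mul_diagonal]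
  have h : (fun i => (if i ∈ U then (1 : ℂ) else 0) * if i ∈ V then 1 else 0)
      = fun i => (if i ∈ V then (1 : ℂ) else 0) * if i ∈ U then 1 else 0 := by
    funext i
    ring
  rw [h]

lemma eps_mul_epsT {t : Finset (Y × Y)} (ht : t ∈ B.rels) (htne : t ≠ diagRel Y) :
    eps ({y₀} : Finset Y) * eps (pointFiber y₀ t) = 0 := by
  rw [eps_comm, epsT_mul_eps B y₀ ht htne]

lemma Lmod {e : Matrix X X ℂ} (heT : e ∈ terwAlg A x₀)
    (hcomm : ∀ a ∈ terwAlg A x₀, a * e = e * a)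
    (hJe : allOnes X * e = 0) :
    ∀ a ∈ wreathTerw A B x₀ y₀, ∀ c : Matrix X X ℂ, c ∈ terwAlg A x₀ → c * e = c →
      ∃ c', c' ∈ terwAlg A x₀ ∧ c' * e = c' ∧
        a * (c ⊗ₖ eps ({y₀} : Finset Y)) = c' ⊗ₖ eps ({y₀} : Finset Y) := by
  intro a ha
  induction ha using Algebra.adjoin_induction with
  | mem g hg =>
    intro c hcT hce
    simp only [wreathGens, Set.mem_union, Set.mem_setOf_eq] at hg
    rcases hg with ((⟨s, hs, rfl⟩ | ⟨s, hs, rfl⟩) | ⟨t, ht, htne, rfl⟩) | ⟨t, ht, htne, rfl⟩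
    · refine ⟨adjMat s * c, mul_mem (adjMat_mem A x₀ hs) hcT, by rw [mul_assoc, hce], ?_⟩
      rw [← Matrix.mul_kronecker_mul, one_mul]
    · refine ⟨eps (pointFiber x₀ s) * c, mul_mem (epsFib_mem A x₀ hs) hcT,
        by rw [mul_assoc, hce], ?_⟩
      rw [← Matrix.mul_kronecker_mul, eps_idem]
    · refine ⟨0, zero_mem _, by rw [zero_mul], ?_⟩
      have hec : e * c = c := by rw [← hcomm c hcT, hce]
      have hJc : allOnes X * c = 0 := by rw [← hec, ← mul_assoc, hJe, zero_mul]
      rw [← Matrix.mul_kronecker_mul, hJc, Matrix.zero_kronecker, Matrix.zero_kronecker]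
    · refine ⟨0, zero_mem _, by rw [zero_mul], ?_⟩
      rw [← Matrix.mul_kronecker_mul, one_mul, epsT_mul_eps B y₀ ht htne,
        Matrix.kronecker_zero, Matrix.zero_kronecker]
  | algebraMap r =>
    intro c hcT hce
    refine ⟨r • c, Subalgebra.smul_mem _ hcT r, by rw [smul_mul_assoc, hce], ?_⟩
    rw [Algebra.algebraMap_eq_smul_one, smul_mul_assoc, one_mul, Matrix.smul_kronecker]
  | add x y hx hy ihx ihy =>
    intro c hcT hce
    obtain ⟨cx, hcxT, hcxe, hx'⟩ := ihx c hcT hce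
    obtain ⟨cy, hcyT, hcye, hy'⟩ := ihy c hcT hce
    refine ⟨cx + cy, add_mem hcxT hcyT, by rw [add_mul, hcxe, hcye], ?_⟩
    rw [add_mul, hx', hy', Matrix.add_kronecker]
  | mul x y hx hy ihx ihy =>
    intro c hcT hce
    obtain ⟨cy, hcyT, hcye, hy'⟩ := ihy c hcT hce
    obtain ⟨cxy, h1, h2, h3⟩ := ihx cy hcyT hcye
    exact ⟨cxy, h1, h2, by rw [mul_assoc, hy', h3]⟩

lemma Pcentral {e : Matrix X X ℂ}
    (hcomm : ∀ a ∈ terwAlg A x₀, a * e = e * a)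
    (hJe : allOnes X * e = 0) (heJ : e * allOnes X = 0) :
    ∀ a ∈ wreathTerw A B x₀ y₀,
      a * (e ⊗ₖ eps ({y₀} : Finset Y)) = (e ⊗ₖ eps ({y₀} : Finset Y)) * a := by
  intro a ha
  induction ha using Algebra.adjoin_induction with
  | mem g hg =>
    simp only [wreathGens, Set.mem_union, Set.mem_setOf_eq] at hg
    rcases hg with ((⟨s, hs, rfl⟩ | ⟨s, hs, rfl⟩) | ⟨t, ht, htne, rfl⟩) | ⟨t, ht, htne, rfl⟩
    · rw [← Matrix.mul_kronecker_mul, ← Matrix.mul_kronecker_mul, one_mul, mul_one,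
        hcomm _ (adjMat_mem A x₀ hs)]
    · rw [← Matrix.mul_kronecker_mul, ← Matrix.mul_kronecker_mul, eps_idem,
        hcomm _ (epsFib_mem A x₀ hs)]
    · rw [← Matrix.mul_kronecker_mul, ← Matrix.mul_kronecker_mul, hJe, heJ,
        Matrix.zero_kronecker, Matrix.zero_kronecker]
    · rw [← Matrix.mul_kronecker_mul, ← Matrix.mul_kronecker_mul, one_mul, mul_one,
        epsT_mul_eps B y₀ ht htne, eps_mul_epsT B y₀ ht htne,
        Matrix.kronecker_zero]
  | algebraMap r =>
    rw [Algebra.algebraMap_eq_smul_one, smul_mul_assoc, one_mul, mul_smul_comm, mul_one]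
  | add x y hx hy ihx ihy => rw [add_mul, mul_add, ihx, ihy]
  | mul x y hx hy ihx ihy => rw [mul_assoc, ihy, ← mul_assoc, ihx, mul_assoc]

end MyWreath

section Statements

variable {X Y : Type*} [Fintype X] [DecidableEq X] [Fintype Y] [DecidableEq Y]

theorem stmt9 (A : AssocScheme X) (B : AssocScheme Y) (h3 : ThreeEquivalenced B)
    (x₀ : X) (y₀ : Y) (e : Matrix X X ℂ)
    (he : IsCPI (terwAlg A x₀ : Set (Matrix X X ℂ)) e)
    (hne : e ≠ trivTerwIdem A x₀) :
    IsCPI (wreathTerw A B x₀ y₀ : Set (Matrix (X × Y) (X × Y) ℂ))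
      (e ⊗ₖ eps ({y₀} : Finset Y)) := by
  obtain ⟨heJ, hJe⟩ := eJ_zero A x₀ he hne
  obtain ⟨heT, hne0, hidem, hcomm, hprim⟩ := he
  refine ⟨mem_TW A B x₀ y₀ heT, ?_, ?_, ?_, ?_⟩
  · intro h
    exact hne0 (kron_inj (h.trans (Matrix.zero_kronecker _).symm))
  · rw [kron_eps_mul, hidem]
  · exact Pcentral A B x₀ y₀ hcomm hJe heJ
  · rintro ⟨f, g, hfW, hgW, hf0, hg0, hff, hgg, hfc, hgc, hfg, hgf, hsum⟩
    have hfP : f * (e ⊗ₖ eps ({y₀} : Finset Y)) = f := by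
      rw [hsum, mul_add, hfg, add_zero, hff]
    have hgP : g * (e ⊗ₖ eps ({y₀} : Finset Y)) = g := by
      rw [hsum, mul_add, hgf, zero_add, hgg]
    obtain ⟨cf, hcfT, hcfe, hf'⟩ := Lmod A B x₀ y₀ heT hcomm hJe f hfW e heT hidem
    obtain ⟨cg, hcgT, hcge, hg'⟩ := Lmod A B x₀ y₀ heT hcomm hJe g hgW e heT hidem
    have hfeq : f = cf ⊗ₖ eps ({y₀} : Finset Y) := by rw [← hfP, hf']
    have hgeq : g = cg ⊗ₖ eps ({y₀} : Finset Y) := by rw [← hgP, hg']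
    apply hprim
    refine ⟨cf, cg, hcfT, hcgT, ?_, ?_, ?_, ?_, ?_, ?_, ?_, ?_, ?_⟩
    · intro h0
      exact hf0 (by rw [hfeq, h0, Matrix.zero_kronecker])
    · intro h0
      exact hg0 (by rw [hgeq, h0, Matrix.zero_kronecker])
    · rw [hfeq, kron_eps_mul] at hff
      exact kron_inj hff
    · rw [hgeq, kron_eps_mul] at hgg
      exact kron_inj hgg
    · intro a haT
      have h1 := hfc (a ⊗ₖ eps ({y₀} : Finset Y)) (mem_TW A B x₀ y₀ haT)
      rw [hfeq, kron_eps_mul, kron_eps_mul] at h1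
      exact kron_inj h1
    · intro a haT
      have h1 := hgc (a ⊗ₖ eps ({y₀} : Finset Y)) (mem_TW A B x₀ y₀ haT)
      rw [hgeq, kron_eps_mul, kron_eps_mul] at h1
      exact kron_inj h1
    · rw [hfeq, hgeq, kron_eps_mul] at hfg
      exact kron_inj (hfg.trans (Matrix.zero_kronecker _).symm)
    · rw [hfeq, hgeq, kron_eps_mul] at hgf
      exact kron_inj (hgf.trans (Matrix.zero_kronecker _).symm)
    · rw [hfeq, hgeq, ← Matrix.add_kronecker] at hsum
      exact kron_inj hsum

end Statements
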